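/- arXiv:1409.8547 — 2 statements merged into one kernel-verified Lean document; each statement's English description precedes it below -/
import Mathlib

section
/- Let f: ℝ^n → ℝ be convex and differentiable, ρ: ℝ^n → ℝ convex with all subgradients bounded in norm by B ≥ 0, and λ ≥ 0. Suppose f satisfies f(y) ≤ f(ȳ) + ⟨∇f(ȳ), y - ȳ⟩ + (L/2)‖y - ȳ‖₂² for all y, ȳ and some L > 0. If x̄ satisfies λρ(x̄) + f(x̄) - min_x {λρ(x) + f(x)} ≤ α for some α ≥ 0, then ‖∇f(x̄)‖₂ ≤ √(2Lα) + λB. -/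
open RealInnerProductSpace

lemma exists_subgradient' {n : ℕ} (ρ : EuclideanSpace ℝ (Fin n) → ℝ)
    (hρ : ConvexOn ℝ Set.univ ρ) (y : EuclideanSpace ℝ (Fin n)) :
    ∃ q : EuclideanSpace ℝ (Fin n), ∀ z, ρ y + ⟪q, z - y⟫ ≤ ρ z := by
  have hcont : Continuous ρ := hρ.locallyLipschitz.continuous
  set s : Set (EuclideanSpace ℝ (Fin n) × ℝ) := {p | ρ p.1 < p.2} with hs
  have hsconv : Convex ℝ s := by
    rintro ⟨x1, t1⟩ h1 ⟨x2, t2⟩ h2 a b ha hb hab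
    simp only [hs, Set.mem_setOf_eq] at h1 h2 ⊢
    have hcvx := hρ.2 (Set.mem_univ x1) (Set.mem_univ x2) ha hb hab
    have hlt : a * ρ x1 + b * ρ x2 < a * t1 + b * t2 := by
      rcases ha.eq_or_lt with rfl | ha'
      · have hb1 : b = 1 := by linarith
        simp [hb1, h2]
      · have h1' : a * ρ x1 < a * t1 := by nlinarith
        have h2' : b * ρ x2 ≤ b * t2 := by nlinarith
        linarith
    calc ρ (a • x1 + b • x2) ≤ a * ρ x1 + b * ρ x2 := by simpa using hcvx
      _ < a * t1 + b * t2 := hlt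
  have hsopen : IsOpen s := by
    have hseq : s = (fun p : EuclideanSpace ℝ (Fin n) × ℝ => ρ p.1 - p.2) ⁻¹' Set.Iio 0 := by
      ext p; simp [hs, sub_neg]
    rw [hseq]
    exact isOpen_Iio.preimage ((hcont.comp continuous_fst).sub continuous_snd)
  have hnotmem : (y, ρ y) ∉ s := by simp [hs]
  obtain ⟨F, hF⟩ := geometric_hahn_banach_open_point hsconv hsopen hnotmem
  set Fl : EuclideanSpace ℝ (Fin n) →L[ℝ] ℝ :=
    F.comp (ContinuousLinearMap.inl ℝ (EuclideanSpace ℝ (Fin n)) ℝ) with hFl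
  set c : ℝ := F (0, 1) with hc
  have hFdecomp : ∀ (z : EuclideanSpace ℝ (Fin n)) (t : ℝ), F (z, t) = Fl z + t * c := by
    intro z t
    have hz : (z, t) = ((z, (0:ℝ)) : EuclideanSpace ℝ (Fin n) × ℝ)
        + t • (((0 : EuclideanSpace ℝ (Fin n)), (1:ℝ))) := by
      simp [Prod.ext_iff]
    rw [hz, map_add, map_smul]
    simp [hFl, hc, smul_eq_mul, ContinuousLinearMap.comp_apply]
  have hcneg : c < 0 := by
    have h1 : ((y, ρ y + 1) : EuclideanSpace ℝ (Fin n) × ℝ) ∈ s := by simp [hs]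
    have hlt := hF _ h1
    rw [hFdecomp, hFdecomp] at hlt
    linarith
  have hkey : ∀ z : EuclideanSpace ℝ (Fin n), Fl z + ρ z * c ≤ Fl y + ρ y * c := by
    intro z
    refine le_of_forall_pos_lt_add fun ε hε => ?_
    have hmem : ((z, ρ z + ε / (-c)) : EuclideanSpace ℝ (Fin n) × ℝ) ∈ s := by
      simp only [hs, Set.mem_setOf_eq]
      have : 0 < ε / (-c) := div_pos hε (by linarith)
      linarith
    have hlt := hF _ hmem
    rw [hFdecomp, hFdecomp] at hlt
    have hεc : (ε / (-c)) * c = -ε := by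
      have hne : c ≠ 0 := hcneg.ne
      field_simp
    nlinarith [hlt]
  set h : EuclideanSpace ℝ (Fin n) →L[ℝ] ℝ := (-c)⁻¹ • Fl with hh
  refine ⟨(InnerProductSpace.toDual ℝ (EuclideanSpace ℝ (Fin n))).symm h, fun z => ?_⟩
  have hq : ⟪(InnerProductSpace.toDual ℝ (EuclideanSpace ℝ (Fin n))).symm h, z - y⟫ = h (z - y) :=
    InnerProductSpace.toDual_symm_apply
  rw [hq]
  have hz := hkey z
  have hhval : h (z - y) = (-c)⁻¹ * (Fl z - Fl y) := by
    simp [hh, smul_eq_mul, map_sub]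
    ring
  have hcpos : 0 < -c := by linarith
  rw [hhval]
  have h2 : (-c)⁻¹ * (Fl z - Fl y) ≤ ρ z - ρ y := by
    rw [inv_mul_le_iff₀ hcpos]
    nlinarith
  linarith

/-- Single-block case of Lemma 1: if x̄ is α-suboptimal for min λρ + f, where f has an
L-quadratic upper bound and all subgradients of the convex ρ are bounded by B, then
‖∇f(x̄)‖ ≤ √(2Lα) + λB. -/
theorem stmt_1 (n : ℕ) (f ρ : EuclideanSpace ℝ (Fin n) → ℝ)
    (f' : EuclideanSpace ℝ (Fin n) → EuclideanSpace ℝ (Fin n))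
    (hf' : ∀ x, HasGradientAt f (f' x) x)
    (hfconv : ConvexOn ℝ Set.univ f) (hρconv : ConvexOn ℝ Set.univ ρ)
    (B : ℝ) (hB : 0 ≤ B)
    (hsub : ∀ x q : EuclideanSpace ℝ (Fin n),
      (∀ y, ρ x + ⟪q, y - x⟫ ≤ ρ y) → ‖q‖ ≤ B)
    (L : ℝ) (hL : 0 < L)
    (hquad : ∀ y ybar : EuclideanSpace ℝ (Fin n),
      f y ≤ f ybar + ⟪f' ybar, y - ybar⟫ + L / 2 * ‖y - ybar‖ ^ 2)
    (lam : ℝ) (hlam : 0 ≤ lam) (α : ℝ) (hα : 0 ≤ α)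
    (xbar : EuclideanSpace ℝ (Fin n))
    (hsubopt : ∀ x, lam * ρ xbar + f xbar ≤ lam * ρ x + f x + α) :
    ‖f' xbar‖ ≤ Real.sqrt (2 * L * α) + lam * B := by
  set g := f' xbar with hg
  by_cases hG : ‖g‖ ≤ lam * B
  · have h0 : 0 ≤ Real.sqrt (2 * L * α) := Real.sqrt_nonneg _
    linarith
  push_neg at hG
  have hGpos : 0 < ‖g‖ := lt_of_le_of_lt (by positivity) hG
  set t : ℝ := (‖g‖ - lam * B) / (L * ‖g‖) with htdef
  have ht : 0 ≤ t := div_nonneg (by linarith) (by positivity)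
  set x := xbar - t • g with hx
  have hxs : x - xbar = -(t • g) := by rw [hx]; abel
  have hnorm : ‖x - xbar‖ = t * ‖g‖ := by
    rw [hxs, norm_neg, norm_smul, Real.norm_of_nonneg ht]
  have hinner : ⟪g, x - xbar⟫ = -(t * ‖g‖ ^ 2) := by
    rw [hxs, inner_neg_right, real_inner_smul_right, real_inner_self_eq_norm_sq]
  have hfx : f x ≤ f xbar - t * ‖g‖ ^ 2 + L / 2 * (t * ‖g‖) ^ 2 := by
    have := hquad x xbar
    rw [hinner, hnorm] at this
    linarith
  obtain ⟨q, hq⟩ := exists_subgradient' ρ hρconv x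
  have hqB : ‖q‖ ≤ B := hsub x q hq
  have hρx : ρ x ≤ ρ xbar + B * (t * ‖g‖) := by
    have h1 := hq xbar
    have habs : |⟪q, xbar - x⟫| ≤ B * (t * ‖g‖) := by
      calc |⟪q, xbar - x⟫| ≤ ‖q‖ * ‖xbar - x‖ := abs_real_inner_le_norm _ _
        _ = ‖q‖ * (t * ‖g‖) := by rw [norm_sub_rev, hnorm]
        _ ≤ B * (t * ‖g‖) := by
            apply mul_le_mul_of_nonneg_right hqB (by positivity)
    have := neg_abs_le ⟪q, xbar - x⟫
    linarith
  have key := hsubopt x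
  have h0 : 0 ≤ lam * (B * (t * ‖g‖)) - t * ‖g‖ ^ 2 + L / 2 * (t * ‖g‖) ^ 2 + α := by
    have hρ' : lam * ρ x ≤ lam * (ρ xbar + B * (t * ‖g‖)) :=
      mul_le_mul_of_nonneg_left hρx hlam
    nlinarith [key, hfx, hρ']
  have hu : L * (t * ‖g‖) = ‖g‖ - lam * B := by
    rw [htdef]
    field_simp
  have hs2 : (‖g‖ - lam * B) ^ 2 ≤ 2 * L * α := by
    nlinarith [h0, hu, sq_nonneg (t * ‖g‖)]
  have hfin : ‖g‖ - lam * B ≤ Real.sqrt (2 * L * α) := by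
    have h1 := Real.sqrt_le_sqrt hs2
    rwa [Real.sqrt_sq (by linarith)] at h1
  linarith
end

section
/- Let ρ(x) = β₁‖x‖₁ + β₂‖x‖₂ on ℝ^n with β₁, β₂ > 0. For t > 0 and x̄ ∈ ℝ^n, the proximal map x^p = prox_{tρ}(x̄) is given by x^p = η · max{1 - tβ₂/‖η‖₂, 0}, where η = sgn(x̄) ⊙ max{|x̄| - tβ₁, 0} (componentwise), with the convention x^p = 0 when η = 0. That is, the prox of the sum equals the block soft-threshold applied after the componentwise soft-threshold. -/
open Classical
open scoped RealInnerProductSpace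

lemma soft_coord (β₁ t a e : ℝ) (hβ₁ : 0 < β₁) (ht : 0 < t)
    (he : e = Real.sign a * max (|a| - t * β₁) 0) :
    |a - e| ≤ t * β₁ ∧ (a - e) * e = t * β₁ * |e| := by
  have htβ : 0 < t * β₁ := mul_pos ht hβ₁
  rcases le_total |a| (t * β₁) with h | h
  · have hmax : max (|a| - t * β₁) 0 = 0 := max_eq_right (by linarith)
    rw [he, hmax, mul_zero]
    constructor
    · simpa using h
    · simp
  · have hmax : max (|a| - t * β₁) 0 = |a| - t * β₁ := max_eq_left (by linarith)
    have ha : a ≠ 0 := by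
      intro h0; rw [h0] at h; simp at h; linarith
    rcases ha.lt_or_gt with hneg | hpos
    · have he' : e = a + t * β₁ := by
        rw [he, hmax, Real.sign_of_neg hneg, abs_of_neg hneg]; ring
      have hab : t * β₁ ≤ -a := by rw [abs_of_neg hneg] at h; exact h
      have henp : e ≤ 0 := by rw [he']; linarith
      constructor
      · have : a - e = -(t * β₁) := by rw [he']; ring
        rw [this, abs_neg, abs_of_pos htβ]
      · rw [he', abs_of_nonpos (by rw [he'] at henp; exact henp : a + t * β₁ ≤ 0)]; ring
    · have he' : e = a - t * β₁ := by
        rw [he, hmax, Real.sign_of_pos hpos, abs_of_pos hpos]; ring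
      have hab : t * β₁ ≤ a := by rw [abs_of_pos hpos] at h; exact h
      constructor
      · have : a - e = t * β₁ := by rw [he']; ring
        rw [this, abs_of_pos htβ]
      · rw [he', abs_of_nonneg (by linarith : (0:ℝ) ≤ a - t * β₁)]; ring


/-- Subgradient-certificate criterion: if u is an ℓ¹-subgradient at xp, v an ℓ²-subgradient
at xp, and stationarity holds, then xp minimizes the objective. -/
lemma prox_min_of_cert (n : ℕ) (β₁ β₂ t : ℝ) (hβ₁ : 0 < β₁) (hβ₂ : 0 < β₂) (ht : 0 < t)
    (xbar xp u v : EuclideanSpace ℝ (Fin n))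
    (hu1 : ∀ j, u j * xp j = |xp j|)
    (hu2 : ∀ j, ∀ y : ℝ, u j * y ≤ |y|)
    (hv1 : ‖v‖ ≤ 1) (hv2 : ⟪v, xp⟫ = ‖xp‖)
    (hstat : ∀ j, xp j - xbar j + t * β₁ * u j + t * β₂ * v j = 0)
    (y : EuclideanSpace ℝ (Fin n)) :
    t * (β₁ * ∑ j, |xp j| + β₂ * ‖xp‖) + 1 / 2 * ‖xp - xbar‖ ^ 2 ≤
      t * (β₁ * ∑ j, |y j| + β₂ * ‖y‖) + 1 / 2 * ‖y - xbar‖ ^ 2 := by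
  have hinner : ∀ a b : EuclideanSpace ℝ (Fin n), ⟪a, b⟫ = ∑ j, a j * b j := by
    intro a b; simp [PiLp.inner_apply, RCLike.inner_apply, conj_trivial, mul_comm]
  set g : EuclideanSpace ℝ (Fin n) := y - xp with hg
  have hgj : ∀ j, g j = y j - xp j := fun j => rfl
  -- ℓ¹ subgradient inequality
  have h1 : ∑ j, |xp j| + ∑ j, u j * g j ≤ ∑ j, |y j| := by
    rw [← Finset.sum_add_distrib]
    apply Finset.sum_le_sum
    intro j _
    have e : u j * g j = u j * y j - u j * xp j := by rw [hgj j]; ring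
    have := hu1 j
    have := hu2 j (y j)
    linarith
  -- ℓ² subgradient inequality
  have h2 : ‖xp‖ + ⟪v, g⟫ ≤ ‖y‖ := by
    have hvy : ⟪v, y⟫ ≤ ‖y‖ := by
      have := real_inner_le_norm v y
      nlinarith [norm_nonneg y]
    have : ⟪v, g⟫ = ⟪v, y⟫ - ⟪v, xp⟫ := by rw [hg, inner_sub_right]
    linarith [hv2, this, hvy]
  -- quadratic expansion
  have h4 : ‖y - xbar‖ ^ 2 = ‖xp - xbar‖ ^ 2 + 2 * ⟪xp - xbar, g⟫ + ‖g‖ ^ 2 := by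
    have key : xp - xbar + g = y - xbar := by rw [hg]; abel
    rw [← key]; exact norm_add_sq_real _ _
  -- stationarity summed against g
  have h3 : ⟪xp - xbar, g⟫ + t * β₁ * (∑ j, u j * g j) + t * β₂ * ⟪v, g⟫ = 0 := by
    rw [hinner, hinner, Finset.mul_sum, Finset.mul_sum, ← Finset.sum_add_distrib,
      ← Finset.sum_add_distrib]
    apply Finset.sum_eq_zero
    intro j _
    have hj : (xp - xbar) j = xp j - xbar j := rfl
    rw [hj]
    linear_combination (g j) * hstat j
  have htβ₁ : (0:ℝ) ≤ t * β₁ := by positivity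
  have htβ₂ : (0:ℝ) ≤ t * β₂ := by positivity
  have m1 : t * β₁ * (∑ j, |xp j| + ∑ j, u j * g j) ≤ t * β₁ * ∑ j, |y j| :=
    mul_le_mul_of_nonneg_left h1 htβ₁
  have m2 : t * β₂ * (‖xp‖ + ⟪v, g⟫) ≤ t * β₂ * ‖y‖ :=
    mul_le_mul_of_nonneg_left h2 htβ₂
  nlinarith [sq_nonneg ‖g‖]

/-- Strict convexity: the minimizer is unique. -/
lemma prox_uniq_aux (n : ℕ) (β₁ β₂ t : ℝ) (hβ₁ : 0 < β₁) (hβ₂ : 0 < β₂) (ht : 0 < t)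
    (xbar y xp : EuclideanSpace ℝ (Fin n))
    (hy : ∀ z : EuclideanSpace ℝ (Fin n),
        t * (β₁ * ∑ j, |y j| + β₂ * ‖y‖) + 1 / 2 * ‖y - xbar‖ ^ 2 ≤
          t * (β₁ * ∑ j, |z j| + β₂ * ‖z‖) + 1 / 2 * ‖z - xbar‖ ^ 2)
    (hxp : ∀ z : EuclideanSpace ℝ (Fin n),
        t * (β₁ * ∑ j, |xp j| + β₂ * ‖xp‖) + 1 / 2 * ‖xp - xbar‖ ^ 2 ≤
          t * (β₁ * ∑ j, |z j| + β₂ * ‖z‖) + 1 / 2 * ‖z - xbar‖ ^ 2) :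
    y = xp := by
  by_contra hne
  set m : EuclideanSpace ℝ (Fin n) := (2:ℝ)⁻¹ • (y + xp) with hm
  have heq : t * (β₁ * ∑ j, |y j| + β₂ * ‖y‖) + 1 / 2 * ‖y - xbar‖ ^ 2 =
      t * (β₁ * ∑ j, |xp j| + β₂ * ‖xp‖) + 1 / 2 * ‖xp - xbar‖ ^ 2 :=
    le_antisymm (hy xp) (hxp y)
  have hA : ∑ j, |m j| ≤ 2⁻¹ * ∑ j, |y j| + 2⁻¹ * ∑ j, |xp j| := by
    rw [Finset.mul_sum, Finset.mul_sum, ← Finset.sum_add_distrib]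
    apply Finset.sum_le_sum
    intro j _
    have hmj : m j = 2⁻¹ * (y j + xp j) := rfl
    rw [hmj, abs_mul]
    have := abs_add_le (y j) (xp j)
    rw [abs_of_pos (by norm_num : (0:ℝ) < 2⁻¹)]
    linarith
  have hB : ‖m‖ ≤ 2⁻¹ * ‖y‖ + 2⁻¹ * ‖xp‖ := by
    rw [hm]
    calc ‖(2:ℝ)⁻¹ • (y + xp)‖ = 2⁻¹ * ‖y + xp‖ := by
          rw [norm_smul]; norm_num
      _ ≤ 2⁻¹ * (‖y‖ + ‖xp‖) := by
          have := norm_add_le y xp; linarith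
      _ = 2⁻¹ * ‖y‖ + 2⁻¹ * ‖xp‖ := by ring
  have hC : ‖m - xbar‖ ^ 2 =
      2⁻¹ * ‖y - xbar‖ ^ 2 + 2⁻¹ * ‖xp - xbar‖ ^ 2 - 4⁻¹ * ‖y - xp‖ ^ 2 := by
    have hmx : m - xbar = (2:ℝ)⁻¹ • ((y - xbar) + (xp - xbar)) := by
      rw [hm]; module
    have hpar : ‖(y - xbar) + (xp - xbar)‖ ^ 2 =
        2 * ‖y - xbar‖ ^ 2 + 2 * ‖xp - xbar‖ ^ 2 - ‖(y - xbar) - (xp - xbar)‖ ^ 2 := by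
      have h1 := norm_add_sq_real (y - xbar) (xp - xbar)
      have h2 := norm_sub_sq_real (y - xbar) (xp - xbar)
      linarith
    have hyx : (y - xbar) - (xp - xbar) = y - xp := by abel
    rw [hmx, norm_smul]
    rw [hyx] at hpar
    have : ‖(2:ℝ)⁻¹‖ = 2⁻¹ := by norm_num
    rw [this, mul_pow, hpar]
    ring
  have hD : 0 < ‖y - xp‖ ^ 2 := by
    have h0 : y - xp ≠ 0 := sub_ne_zero.mpr hne
    exact pow_pos (norm_pos_iff.mpr h0) 2
  have htβ₁ : (0:ℝ) ≤ t * β₁ := by positivity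
  have htβ₂ : (0:ℝ) ≤ t * β₂ := by positivity
  have hmle := hy m
  have e1 : t * β₁ * ∑ j, |m j| ≤ t * β₁ * (2⁻¹ * ∑ j, |y j| + 2⁻¹ * ∑ j, |xp j|) :=
    mul_le_mul_of_nonneg_left hA htβ₁
  have e2 : t * β₂ * ‖m‖ ≤ t * β₂ * (2⁻¹ * ‖y‖ + 2⁻¹ * ‖xp‖) :=
    mul_le_mul_of_nonneg_left hB htβ₂
  nlinarith

/-- Sparse-group soft-thresholding (single-group case of Lemma 9): for
ρ(x) = β₁‖x‖₁ + β₂‖x‖₂ and t > 0, prox_{tρ}(x̄) = η·max(1 - tβ₂/‖η‖₂, 0) where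
η = sgn(x̄) ⊙ max(|x̄| - tβ₁, 0) (and prox = 0 when η = 0): this point is the unique
minimizer of t(β₁‖y‖₁ + β₂‖y‖₂) + ½‖y - x̄‖₂². -/
theorem stmt_11 (n : ℕ) (β₁ β₂ t : ℝ) (hβ₁ : 0 < β₁) (hβ₂ : 0 < β₂) (ht : 0 < t)
    (xbar η xp : EuclideanSpace ℝ (Fin n))
    (hη : ∀ j, η j = Real.sign (xbar j) * max (|xbar j| - t * β₁) 0)
    (hxp : xp = if η = 0 then 0 else max (1 - t * β₂ / ‖η‖) 0 • η) :
    (∀ y : EuclideanSpace ℝ (Fin n),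
        t * (β₁ * ∑ j, |xp j| + β₂ * ‖xp‖) + 1 / 2 * ‖xp - xbar‖ ^ 2 ≤
          t * (β₁ * ∑ j, |y j| + β₂ * ‖y‖) + 1 / 2 * ‖y - xbar‖ ^ 2) ∧
      ∀ y : EuclideanSpace ℝ (Fin n),
        (∀ z : EuclideanSpace ℝ (Fin n),
            t * (β₁ * ∑ j, |y j| + β₂ * ‖y‖) + 1 / 2 * ‖y - xbar‖ ^ 2 ≤
              t * (β₁ * ∑ j, |z j| + β₂ * ‖z‖) + 1 / 2 * ‖z - xbar‖ ^ 2) → y = xp := by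
  have htβ₁ : 0 < t * β₁ := mul_pos ht hβ₁
  have htβ₂ : 0 < t * β₂ := mul_pos ht hβ₂
  set M : ℝ := max ‖η‖ (t * β₂) with hMdef
  have hM0 : 0 < M := lt_of_lt_of_le htβ₂ (le_max_right _ _)
  have hηM : ‖η‖ ≤ M := le_max_left _ _
  set d : ℝ := 1 - t * β₂ / M with hddef
  have hd0 : 0 ≤ d := by
    have : t * β₂ / M ≤ 1 := (div_le_one hM0).mpr (le_max_right _ _)
    simp [hddef]; linarith
  set u : EuclideanSpace ℝ (Fin n) := WithLp.toLp 2 (fun j => (xbar j - η j) / (t * β₁)) with hudef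
  set v : EuclideanSpace ℝ (Fin n) := M⁻¹ • η with hvdef
  have huj : ∀ j, u j = (xbar j - η j) / (t * β₁) := fun j => rfl
  have hvj : ∀ j, v j = M⁻¹ * η j := fun j => rfl
  -- xp = d • η
  have hxpd : xp = d • η := by
    rw [hxp]
    split_ifs with h0
    · rw [h0]; simp
    · have hpos : 0 < ‖η‖ := norm_pos_iff.mpr h0
      rcases le_or_gt (t * β₂) ‖η‖ with hge | hlt
      · have hMe : M = ‖η‖ := max_eq_left hge
        have hmx : max (1 - t * β₂ / ‖η‖) 0 = 1 - t * β₂ / ‖η‖ :=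
          max_eq_left (sub_nonneg.mpr ((div_le_one hpos).mpr hge))
        rw [hmx, hddef, hMe]
      · have hMe : M = t * β₂ := max_eq_right hlt.le
        have hdz : d = 0 := by
          rw [hddef, hMe]; field_simp; norm_num
        have hmx : max (1 - t * β₂ / ‖η‖) 0 = 0 := by
          apply max_eq_right
          have : 1 ≤ t * β₂ / ‖η‖ := (one_le_div hpos).mpr hlt.le
          linarith
        rw [hmx, hdz]
  have hxpj : ∀ j, xp j = d * η j := by intro j; rw [hxpd]; rfl
  -- coordinatewise key facts
  have hkey : ∀ j, |xbar j - η j| ≤ t * β₁ ∧ (xbar j - η j) * η j = t * β₁ * |η j| :=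
    fun j => soft_coord β₁ t (xbar j) (η j) hβ₁ ht (hη j)
  -- certificate properties
  have hu2 : ∀ j, ∀ z : ℝ, u j * z ≤ |z| := by
    intro j z
    have h1 : |u j| ≤ 1 := by
      rw [huj, abs_div, abs_of_pos htβ₁]
      exact (div_le_one htβ₁).mpr (hkey j).1
    calc u j * z ≤ |u j * z| := le_abs_self _
      _ = |u j| * |z| := abs_mul _ _
      _ ≤ 1 * |z| := mul_le_mul_of_nonneg_right h1 (abs_nonneg _)
      _ = |z| := one_mul _
  have hu1 : ∀ j, u j * xp j = |xp j| := by
    intro j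
    rw [hxpj, huj, abs_mul, abs_of_nonneg hd0]
    have h2 := (hkey j).2
    field_simp
    nlinarith [h2]
  have hv1 : ‖v‖ ≤ 1 := by
    rw [hvdef, norm_smul]
    simp only [norm_inv, Real.norm_eq_abs, abs_of_pos hM0]
    rw [inv_mul_le_iff₀ hM0]
    simpa using hηM
  have hv2 : ⟪v, xp⟫ = ‖xp‖ := by
    rw [hvdef, hxpd, real_inner_smul_left, real_inner_smul_right,
      real_inner_self_eq_norm_sq, norm_smul, Real.norm_eq_abs, abs_of_nonneg hd0]
    rcases max_choice ‖η‖ (t * β₂) with hc | hc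
    · have hMe : M = ‖η‖ := hc
      rw [hMe]
      rcases eq_or_lt_of_le (norm_nonneg η) with hz | hz
      · rw [← hz]; simp
      · field_simp
    · have hMe : M = t * β₂ := hc
      have hdz : d = 0 := by rw [hddef, hMe]; field_simp; norm_num
      rw [hdz]; simp
  have hstat : ∀ j, xp j - xbar j + t * β₁ * u j + t * β₂ * v j = 0 := by
    intro j
    rw [hxpj, huj, hvj, hddef]
    field_simp
    ring
  have hmin := fun y => prox_min_of_cert n β₁ β₂ t hβ₁ hβ₂ ht xbar xp u v hu1 hu2 hv1 hv2 hstat y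
  exact ⟨hmin, fun y hy => prox_uniq_aux n β₁ β₂ t hβ₁ hβ₂ ht xbar y xp hy hmin⟩
end
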